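/- Suppose F∞ = 0 and let h be a profile of maximal height h_max > H₀ and speed c, and assume c·(c·H₀² − v♯∞·h_max²) > 0. Then h attains the value h_max at a unique point x_max ∈ ℝ, h is symmetric with respect to x_max (i.e. h(2·x_max − x) = h(x) for all x), and h is strictly decreasing on the half-line (x_max, ∞). -/

import Mathlib

open Filter Set

private lemma exists_abs_bound (f : ℝ → ℝ) (hf : Continuous f)
    (h1 : Tendsto f atTop (nhds 0)) (h2 : Tendsto f atBot (nhds 0)) :
    ∃ M, ∀ x, |f x| ≤ M := by
  have habs1 : Tendsto (fun x => |f x|) atTop (nhds 0) := by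
    have : Tendsto abs (nhds (0:ℝ)) (nhds |(0:ℝ)|) := continuous_abs.continuousAt
    simpa [Function.comp_def] using this.comp h1
  have habs2 : Tendsto (fun x => |f x|) atBot (nhds 0) := by
    have : Tendsto abs (nhds (0:ℝ)) (nhds |(0:ℝ)|) := continuous_abs.continuousAt
    simpa [Function.comp_def] using this.comp h2
  obtain ⟨X, hX⟩ := (habs1.eventually (eventually_lt_nhds one_pos)).exists_forall_of_atTop
  obtain ⟨Y, hY⟩ := (habs2.eventually (eventually_lt_nhds one_pos)).exists_forall_of_atBot
  obtain ⟨C, hC⟩ := isCompact_Icc.exists_bound_of_continuousOn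
    (s := Icc (min Y X) (max Y X)) hf.continuousOn
  refine ⟨max C 1, fun x => ?_⟩
  rcases le_or_gt x Y with hxY | hxY
  · exact le_trans (hY x hxY).le (le_max_right _ _)
  rcases le_or_gt X x with hXx | hXx
  · exact le_trans (hX x hXx).le (le_max_right _ _)
  · have : x ∈ Icc (min Y X) (max Y X) :=
      ⟨le_trans (min_le_left _ _) hxY.le, le_trans hXx.le (le_max_right _ _)⟩
    simpa [Real.norm_eq_abs] using le_trans (hC x this) (le_max_left _ _)

private lemma exists_lower_bound (f : ℝ → ℝ) (hf : Continuous f) (hpos : ∀ x, 0 < f x)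
    (l : ℝ) (hl : 0 < l)
    (h1 : Tendsto f atTop (nhds (2*l))) (h2 : Tendsto f atBot (nhds (2*l))) :
    ∃ δ > 0, ∀ x, δ ≤ f x := by
  have hll : l < 2*l := by linarith
  obtain ⟨X, hX⟩ := (h1.eventually (eventually_gt_nhds hll)).exists_forall_of_atTop
  obtain ⟨Y, hY⟩ := (h2.eventually (eventually_gt_nhds hll)).exists_forall_of_atBot
  obtain ⟨z, hz, hzmin⟩ := isCompact_Icc.exists_isMinOn
    (s := Icc (min Y X) (max Y X)) (nonempty_Icc.mpr (min_le_max)) hf.continuousOn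
  refine ⟨min l (f z), lt_min hl (hpos z), fun x => ?_⟩
  rcases le_or_gt x Y with hxY | hxY
  · exact le_trans (min_le_left _ _) (hY x hxY).le
  rcases le_or_gt X x with hXx | hXx
  · exact le_trans (min_le_left _ _) (hX x hXx).le
  · have hmem : x ∈ Icc (min Y X) (max Y X) :=
      ⟨le_trans (min_le_left _ _) hxY.le, le_trans hXx.le (le_max_right _ _)⟩
    exact le_trans (min_le_right _ _) (hzmin hmem)

/-- Reflection symmetry about any critical point, via ODE uniqueness. -/
private lemma profile_reflection
    (g H₀ c vs Einf hmax : ℝ) (hH : 0 < H₀) (hc : c ≠ 0)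
    (hcrit : 0 < c * (c * H₀ ^ 2 - vs * hmax ^ 2))
    (h : ℝ → ℝ) (hC2 : ContDiff ℝ 2 h) (hpos : ∀ x, 0 < h x)
    (hode' : ∀ x, (1/3) * c * (c * H₀ ^ 2 - vs * (h x) ^ 2) * deriv (deriv h) x =
      ((h x - H₀) / (2 * h x)) * (2 * c ^ 2 * H₀ - g * h x * (h x + H₀))
        - ((h x) ^ 3 / H₀ ^ 3 - 1) * Einf
        + (c ^ 2 / 3) * H₀ ^ 2 * (deriv h x) ^ 2 / h x)
    (hle : ∀ x, h x ≤ hmax)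
    (δ M : ℝ) (hδ0 : 0 < δ) (hδle : ∀ x, δ ≤ h x) (hMle : ∀ x, |deriv h x| ≤ M)
    (x₀ : ℝ) (hx₀ : deriv h x₀ = 0) :
    ∀ x, h (2 * x₀ - x) = h x := by
  -- smoothness facts
  have hdiff : Differentiable ℝ h := hC2.differentiable two_ne_zero
  have hcont : Continuous h := hdiff.continuous
  have hC1' : ContDiff ℝ 1 (deriv h) := by
    have h2 : ContDiff ℝ ((1:ℕ) + 1) h := by exact_mod_cast hC2
    exact (contDiff_succ_iff_deriv.mp h2).2.2
  have hdiff' : Differentiable ℝ (deriv h) := hC1'.differentiable one_ne_zero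
  have hcont' : Continuous (deriv h) := hdiff'.continuous
  -- nondegeneracy of the coefficient
  have hA : ∀ a : ℝ, 0 < a → a ≤ hmax → 0 < c * (c * H₀ ^ 2 - vs * a ^ 2) := by
    intro a ha hah
    have hc2 : 0 < c ^ 2 := lt_of_le_of_ne (sq_nonneg c) (Ne.symm (pow_ne_zero 2 hc))
    rcases le_or_gt (c * vs) 0 with hcv | hcv
    · nlinarith [sq_nonneg a, mul_pos hc2 (pow_pos hH 2)]
    · nlinarith [mul_le_mul_of_nonneg_left (pow_le_pow_left₀ ha.le hah 2) hcv.le]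
  -- the first-order system vector field
  set Gnum : ℝ × ℝ → ℝ := fun p =>
    (p.1 - H₀) * (2 * c ^ 2 * H₀ - g * p.1 * (p.1 + H₀)) * (1/2)
      - (p.1 ^ 3 * (1/H₀ ^ 3) - 1) * Einf * p.1 + ((c ^ 2 / 3) * H₀ ^ 2) * p.2 ^ 2 with hGnum_def
  set Gden : ℝ × ℝ → ℝ := fun p =>
    (1/3) * c * (c * H₀ ^ 2 - vs * p.1 ^ 2) * p.1 with hGden_def
  set G : ℝ × ℝ → ℝ := fun p => Gnum p / Gden p with hG_def
  set F : ℝ × ℝ → ℝ × ℝ := fun p => (p.2, G p) with hF_def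
  have hGden_pos : ∀ p : ℝ × ℝ, 0 < p.1 → p.1 ≤ hmax → 0 < Gden p := by
    intro p hp1 hp2
    have := hA p.1 hp1 hp2
    have : Gden p = (1/3) * (c * (c * H₀ ^ 2 - vs * p.1 ^ 2)) * p.1 := by
      simp only [hGden_def]; ring
    rw [this]
    positivity
  -- the second derivative in terms of the vector field
  have hkey : ∀ x, deriv (deriv h) x = G (h x, deriv h x) := by
    intro x
    have hd := hGden_pos (h x, deriv h x) (hpos x) (hle x)
    have h0 : h x ≠ 0 := (hpos x).ne'
    have hH0 : (H₀:ℝ) ≠ 0 := hH.ne'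
    have hcoef : (1/3) * c * (c * H₀ ^ 2 - vs * (h x) ^ 2) ≠ 0 := by
      have h1 := hA (h x) (hpos x) (hle x)
      have : (1/3) * c * (c * H₀ ^ 2 - vs * (h x) ^ 2)
          = (1/3) * (c * (c * H₀ ^ 2 - vs * (h x) ^ 2)) := by ring
      rw [this]; positivity
    have e1 : Gnum (h x, deriv h x) =
        ((h x - H₀) / (2 * h x) * (2 * c ^ 2 * H₀ - g * h x * (h x + H₀))
          - ((h x) ^ 3 / H₀ ^ 3 - 1) * Einf
          + c ^ 2 / 3 * H₀ ^ 2 * (deriv h x) ^ 2 / h x) * h x := by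
      simp only [hGnum_def]
      field_simp
      try ring
    have e2 : Gden (h x, deriv h x) =
        ((1/3) * c * (c * H₀ ^ 2 - vs * (h x) ^ 2)) * h x := by
      simp only [hGden_def]; try ring
    show deriv (deriv h) x = Gnum (h x, deriv h x) / Gden (h x, deriv h x)
    rw [e1, e2, mul_div_mul_right _ _ h0, eq_div_iff hcoef]
    linear_combination hode' x
  -- bounds and the compact invariant region
  set Kset : Set (ℝ × ℝ) := Icc δ hmax ×ˢ Icc (-(|M|+1)) (|M|+1) with hKset_def
  set U : Set (ℝ × ℝ) := {p | 0 < p.1 ∧ 0 < c * (c * H₀ ^ 2 - vs * p.1 ^ 2)} with hU_def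
  have hUopen : IsOpen U := by
    apply IsOpen.inter
    · exact isOpen_lt continuous_const continuous_fst
    · exact isOpen_lt continuous_const
        (continuous_const.mul (continuous_const.sub
          (continuous_const.mul (continuous_fst.pow 2))))
  have hKU : Kset ⊆ U := by
    intro p hp
    obtain ⟨hp1, _⟩ := hp
    exact ⟨lt_of_lt_of_le hδ0 hp1.1, hA p.1 (lt_of_lt_of_le hδ0 hp1.1) hp1.2⟩
  have humem : ∀ x, (h x, deriv h x) ∈ Kset := by
    intro x
    refine ⟨⟨hδle x, hle x⟩, ?_⟩
    have := hMle x
    have h1 : |deriv h x| ≤ |M| + 1 := le_trans this (by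
      have := le_abs_self M; linarith)
    exact abs_le.mp h1
  -- smoothness of the vector field on U
  have hFC1 : ContDiffOn ℝ 1 F U := by
    apply ContDiffOn.prodMk
    · exact contDiff_snd.contDiffOn
    · apply ContDiffOn.div
      · apply ContDiff.contDiffOn
        rw [hGnum_def]; fun_prop
      · apply ContDiff.contDiffOn
        rw [hGden_def]; fun_prop
      · intro p hp
        have h3 : Gden p = (1/3) * (c * (c * H₀ ^ 2 - vs * p.1 ^ 2)) * p.1 := by
          simp only [hGden_def]; ring
        rw [h3]
        have := hp.1; have := hp.2
        positivity
  -- Lipschitz on the compact region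
  have hKconv : Convex ℝ Kset := (convex_Icc _ _).prod (convex_Icc _ _)
  have hKcomp : IsCompact Kset := isCompact_Icc.prod isCompact_Icc
  obtain ⟨C, hC⟩ := hKcomp.exists_bound_of_continuousOn
    ((hFC1.continuousOn_fderiv_of_isOpen hUopen le_rfl).mono hKU)
  have hLip : LipschitzOnWith (max C 0).toNNReal F Kset := by
    apply Convex.lipschitzOnWith_of_nnnorm_fderiv_le
      (fun p hp => ((hFC1.contDiffAt (hUopen.mem_nhds (hKU hp))).differentiableAt one_ne_zero))
      (fun p hp => ?_) hKconv
    have h1 : ‖fderiv ℝ F p‖ ≤ max C 0 := le_trans (hC p hp) (le_max_left _ _)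
    have h2 : ((max C 0).toNNReal : ℝ) = max C 0 := Real.coe_toNNReal _ (le_max_right _ _)
    rw [← NNReal.coe_le_coe, coe_nnnorm, h2]
    exact h1
  -- the two solutions
  have hu : ∀ x, HasDerivAt (fun x => (h x, deriv h x))
      (F (h x, deriv h x)) x := by
    intro x
    have h1 : HasDerivAt h (deriv h x) x := (hdiff x).hasDerivAt
    have h2 : HasDerivAt (deriv h) (deriv (deriv h) x) x := (hdiff' x).hasDerivAt
    have h3 := h1.prodMk h2
    have h4 : F (h x, deriv h x) = (deriv h x, deriv (deriv h) x) := by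
      simp only [hF_def]
      exact Prod.ext rfl (hkey x).symm
    rw [h4]
    exact h3
  have hr : ∀ x, HasDerivAt (fun x => (h (2*x₀ - x), -deriv h (2*x₀ - x)))
      (F (h (2*x₀ - x), -deriv h (2*x₀ - x))) x := by
    intro x
    have hσ : HasDerivAt (fun x : ℝ => 2*x₀ - x) (-1) x := by
      simpa using (hasDerivAt_id x).const_sub (2*x₀)
    have h1 : HasDerivAt (fun x => h (2*x₀ - x)) (deriv h (2*x₀-x) * (-1)) x :=
      (hdiff (2*x₀ - x)).hasDerivAt.comp x hσ
    have h2 : HasDerivAt (fun x => -deriv h (2*x₀ - x))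
        (-(deriv (deriv h) (2*x₀-x) * (-1))) x :=
      ((hdiff' (2*x₀ - x)).hasDerivAt.comp x hσ).neg
    have h3 := h1.prodMk h2
    have h4 : F (h (2*x₀ - x), -deriv h (2*x₀ - x))
        = (deriv h (2*x₀-x) * (-1), -(deriv (deriv h) (2*x₀-x) * (-1))) := by
      simp only [hF_def]
      refine Prod.ext (by simp) ?_
      simp only
      rw [hkey (2*x₀-x)]
      have : G (h (2*x₀-x), -deriv h (2*x₀-x)) = G (h (2*x₀-x), deriv h (2*x₀-x)) := by
        simp only [hG_def, hGnum_def, hGden_def]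
        ring_nf
      rw [this]; ring
    rw [h4]
    exact h3
  have hrmem : ∀ x, (h (2*x₀ - x), -deriv h (2*x₀ - x)) ∈ Kset := by
    intro x
    refine ⟨⟨hδle _, hle _⟩, ?_⟩
    have h1 : |(-deriv h (2*x₀-x))| ≤ |M| + 1 := by
      rw [abs_neg]
      exact le_trans (hMle _) (by have := le_abs_self M; linarith)
    exact abs_le.mp h1
  -- uniqueness
  have hsym : ∀ x, x₀ ≤ x → h (2*x₀ - x) = h x := by
    intro b hb
    have hcu : ContinuousOn (fun x => (h x, deriv h x)) (Icc x₀ b) :=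
      (Continuous.prodMk hcont hcont').continuousOn
    have hcr : ContinuousOn (fun x => (h (2*x₀ - x), -deriv h (2*x₀ - x))) (Icc x₀ b) := by
      apply Continuous.continuousOn
      apply Continuous.prodMk
      · exact hcont.comp (continuous_const.sub continuous_id)
      · exact (hcont'.comp (continuous_const.sub continuous_id)).neg
    have heq := ODE_solution_unique_of_mem_Icc_right
      (v := fun _ p => F p) (s := fun _ => Kset) (K := (max C 0).toNNReal)
      (fun _ _ => hLip) hcu (fun t _ => (hu t).hasDerivWithinAt)
      (fun t _ => humem t) hcr (fun t _ => (hr t).hasDerivWithinAt)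
      (fun t _ => hrmem t)
      (by
        simp only [show 2*x₀ - x₀ = x₀ from by ring, hx₀, neg_zero])
    have := heq ⟨hb, le_rfl⟩
    have := congrArg Prod.fst this
    exact this.symm
  intro x
  rcases le_total x₀ x with hx | hx
  · exact hsym x hx
  · have h1 := hsym (2*x₀ - x) (by linarith)
    rw [show 2*x₀ - (2*x₀ - x) = x by ring] at h1
    exact h1.symm

theorem profile_symmetric_and_decreasing
    (g H₀ c vs Einf Finf hmax : ℝ) (hg : 0 < g) (hH : 0 < H₀) (hc : c ≠ 0)
    (hE : 0 < Einf) (hF : Finf = 0) (hmax_gt : H₀ < hmax)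
    (hcrit : 0 < c * (c * H₀ ^ 2 - vs * hmax ^ 2))
    (h : ℝ → ℝ) (hC2 : ContDiff ℝ 2 h) (hpos : ∀ x, 0 < h x)
    (hode : ∀ x, (1/3) * c * (c * H₀ ^ 2 - vs * (h x) ^ 2) * deriv (deriv h) x =
      ((h x - H₀) / (2 * h x)) * (2 * c ^ 2 * H₀ - g * h x * (h x + H₀))
        - ((h x) ^ 3 / H₀ ^ 3 - 1) * Einf
        - 2 * (Finf / c) * (((h x) ^ 2 - H₀ ^ 2) * (h x) ^ 3 / H₀ ^ 5)
        + (c ^ 2 / 3) * H₀ ^ 2 * (deriv h x) ^ 2 / h x)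
    (htop : Tendsto h atTop (nhds H₀)) (hbot : Tendsto h atBot (nhds H₀))
    (htop' : Tendsto (deriv h) atTop (nhds 0))
    (hbot' : Tendsto (deriv h) atBot (nhds 0))
    (hle : ∀ x, h x ≤ hmax) (hatt : ∃ x, h x = hmax) :
    ∃ xmax : ℝ, h xmax = hmax ∧ (∀ y, h y = hmax → y = xmax) ∧
      (∀ x, h (2 * xmax - x) = h x) ∧ StrictAntiOn h (Set.Ioi xmax) := by
  subst hF
  have hode' : ∀ x, (1/3) * c * (c * H₀ ^ 2 - vs * (h x) ^ 2) * deriv (deriv h) x =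
      ((h x - H₀) / (2 * h x)) * (2 * c ^ 2 * H₀ - g * h x * (h x + H₀))
        - ((h x) ^ 3 / H₀ ^ 3 - 1) * Einf
        + (c ^ 2 / 3) * H₀ ^ 2 * (deriv h x) ^ 2 / h x := by
    intro x
    have := hode x
    simpa using this
  have hdiff : Differentiable ℝ h := hC2.differentiable two_ne_zero
  have hcont : Continuous h := hdiff.continuous
  have hC1' : ContDiff ℝ 1 (deriv h) := by
    have h2 : ContDiff ℝ ((1:ℕ) + 1) h := by exact_mod_cast hC2
    exact (contDiff_succ_iff_deriv.mp h2).2.2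
  have hdiff' : Differentiable ℝ (deriv h) := hC1'.differentiable one_ne_zero
  have hcont' : Continuous (deriv h) := hdiff'.continuous
  -- lower bound on h and bound on deriv h
  obtain ⟨δ, hδ0, hδle⟩ := exists_lower_bound h hcont hpos (H₀/2) (by linarith)
    (by rw [show 2*(H₀/2) = H₀ from by ring]; exact htop)
    (by rw [show 2*(H₀/2) = H₀ from by ring]; exact hbot)
  obtain ⟨M, hMle⟩ := exists_abs_bound (deriv h) hcont' htop' hbot'
  -- reflection about any critical point
  have hrefl : ∀ x₀, deriv h x₀ = 0 → ∀ x, h (2*x₀ - x) = h x := fun x₀ hx₀ =>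
    profile_reflection g H₀ c vs Einf hmax hH hc hcrit h hC2 hpos hode' hle δ M hδ0 hδle
      hMle x₀ hx₀
  -- no two distinct critical points
  have hkey2 : ∀ a b, deriv h a = 0 → deriv h b = 0 → a = b := by
    intro a b ha hb
    by_contra hne
    have hper : ∀ x, h (x + 2*(b-a)) = h x := by
      intro x
      have h1 := hrefl b hb (2*a - x)
      have h2 := hrefl a ha x
      rw [show 2*b - (2*a - x) = x + 2*(b-a) from by ring] at h1
      exact h1.trans h2
    have hTne : 2*(b-a) ≠ 0 := by
      intro hT
      exact hne (by linarith : a = b)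
    have hiter : ∀ x, ∀ n : ℕ, h (x + n * (2*(b-a))) = h x := by
      intro x n
      induction n with
      | zero => simp
      | succ n ih =>
        have h1 := hper (x + n*(2*(b-a)))
        rw [show x + (n:ℝ)*(2*(b-a)) + 2*(b-a) = x + ((n:ℕ)+1 : ℝ) * (2*(b-a)) from by
          push_cast; ring] at h1
        have h2 : ((n:ℕ)+1 : ℝ) = (((n+1 : ℕ)) : ℝ) := by push_cast; ring
        rw [h2] at h1
        exact h1.trans ih
    have hH0eq : ∀ x, h x = H₀ := by
      intro x
      have hconst : (fun n : ℕ => h (x + n * (2*(b-a)))) = fun _ => h x :=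
        funext (fun n => hiter x n)
      rcases lt_or_gt_of_ne hTne with hT | hT
      · have htend : Tendsto (fun n : ℕ => x + (n:ℝ) * (2*(b-a))) atTop atBot :=
          tendsto_atBot_add_const_left _ x
            (Tendsto.atTop_mul_const_of_neg hT tendsto_natCast_atTop_atTop)
        have h3 : Tendsto (fun n : ℕ => h (x + (n:ℝ) * (2*(b-a)))) atTop (nhds H₀) :=
          hbot.comp htend
        rw [hconst] at h3
        exact tendsto_nhds_unique tendsto_const_nhds h3
      · have htend : Tendsto (fun n : ℕ => x + (n:ℝ) * (2*(b-a))) atTop atTop :=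
          tendsto_atTop_add_const_left _ x
            (Tendsto.atTop_mul_const hT tendsto_natCast_atTop_atTop)
        have h3 : Tendsto (fun n : ℕ => h (x + (n:ℝ) * (2*(b-a)))) atTop (nhds H₀) :=
          htop.comp htend
        rw [hconst] at h3
        exact tendsto_nhds_unique tendsto_const_nhds h3
    obtain ⟨z, hz⟩ := hatt
    rw [hH0eq z] at hz
    exact absurd hz.symm (ne_of_gt hmax_gt)
  -- the maximum point
  obtain ⟨x₀, hx₀max⟩ := hatt
  have hcrit0 : ∀ y, h y = hmax → deriv h y = 0 := by
    intro y hy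
    have : IsLocalMax h y := Filter.Eventually.of_forall (fun z => (hle z).trans hy.ge)
    exact this.deriv_eq_zero
  have hd0 : deriv h x₀ = 0 := hcrit0 x₀ hx₀max
  have hne0 : ∀ x ∈ Set.Ioi x₀, deriv h x ≠ 0 := by
    intro x hx hx'
    exact ne_of_gt (Set.mem_Ioi.mp hx) (hkey2 x x₀ hx' hd0)
  have hopp : ∀ u v, u ∈ Set.Ioi x₀ → v ∈ Set.Ioi x₀ →
      deriv h u < 0 → 0 < deriv h v → False := by
    intro u v hu hv h1 h2
    rcases le_total u v with hz | hz
    · obtain ⟨z, hz', hz0⟩ := intermediate_value_Ioo hz hcont'.continuousOn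
        (Set.mem_Ioo.mpr ⟨h1, h2⟩)
      exact hne0 z (lt_trans (Set.mem_Ioi.mp hu) hz'.1) hz0
    · obtain ⟨z, hz', hz0⟩ := intermediate_value_Ioo' hz hcont'.continuousOn
        (Set.mem_Ioo.mpr ⟨h1, h2⟩)
      exact hne0 z (lt_trans (Set.mem_Ioi.mp hv) hz'.1) hz0
  have hsign : ∀ x ∈ Set.Ioi x₀, deriv h x < 0 := by
    by_contra hcon
    push_neg at hcon
    obtain ⟨a, ha, ha'⟩ := hcon
    have hapos : 0 < deriv h a := lt_of_le_of_ne ha' (Ne.symm (hne0 a ha))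
    have hall : ∀ x ∈ Set.Ioi x₀, 0 < deriv h x := by
      intro b hb
      rcases lt_trichotomy (deriv h b) 0 with h1 | h1 | h1
      · exact absurd (hopp b a hb ha h1 hapos) (not_false)
      · exact absurd h1 (hne0 b hb)
      · exact h1
    have hmono : StrictMonoOn h (Set.Ici x₀) :=
      strictMonoOn_of_deriv_pos (convex_Ici _) hcont.continuousOn
        (by rw [interior_Ici]; exact hall)
    have h4 : h x₀ < h (x₀ + 1) :=
      hmono (Set.self_mem_Ici) (by simp : x₀ + 1 ∈ Set.Ici x₀) (by linarith)
    rw [hx₀max] at h4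
    exact absurd (hle (x₀ + 1)) (not_le.mpr h4)
  refine ⟨x₀, hx₀max, ?_, hrefl x₀ hd0, ?_⟩
  · intro y hy
    exact hkey2 y x₀ (hcrit0 y hy) hd0
  · exact strictAntiOn_of_deriv_neg (convex_Ioi _) hcont.continuousOn
      (by rw [interior_Ioi]; exact hsign)
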